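/- Let W be a dual Banach space, X ⊆ Y subspaces of W, and suppose Y admits a Lebesgue decomposition relative to W with decomposition operator L. If for every ψ ∈ Y* vanishing on X both Lψ and (I−L)ψ vanish on X, then X admits a Lebesgue decomposition that is compatible with that of Y, i.e. for any ψ ∈ Y*, (Lψ)|_X is the absolutely continuous part of ψ|_X and ((I−L)ψ)|_X is the singular part of ψ|_X. -/

import Mathlib

namespace NormedSpace

/-- The old `NormedSpace.Dual` (removed from Mathlib; `StrongDual` replaces it but only
asks for `[TopologicalSpace E] [AddCommMonoid E] [Module 𝕜 E]`). -/
abbrev Dual (𝕜 : Type*) [NontriviallyNormedField 𝕜] (E : Type*) [SeminormedAddCommGroup E]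
    [NormedSpace 𝕜 E] : Type _ :=
  E →L[𝕜] 𝕜

end NormedSpace

open NormedSpace Filter Topology

def WeakStarContinuous {V : Type*} [NormedAddCommGroup V] [NormedSpace ℂ V]
    (Φ : Dual ℂ V → ℂ) : Prop :=
  Continuous fun w : WeakDual ℂ V => Φ (WeakDual.toStrongDual w)

def ACset {V : Type*} [NormedAddCommGroup V] [NormedSpace ℂ V]
    (X : Subspace ℂ (Dual ℂ V)) : Set (Dual ℂ ↥X) :=
  {φ | ∃ Φ : Dual ℂ V →ₗ[ℂ] ℂ, WeakStarContinuous Φ ∧ ∀ x : ↥X, Φ (x : Dual ℂ V) = φ x}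

def IsLebesgueDecomposition {V : Type*} [NormedAddCommGroup V] [NormedSpace ℂ V]
    (X : Subspace ℂ (Dual ℂ V)) (L : Dual ℂ ↥X →L[ℂ] Dual ℂ ↥X) : Prop :=
  (∀ φ, L (L φ) = L φ) ∧ Set.range L = ACset X ∧
    ∀ φ : Dual ℂ ↥X, ‖φ‖ = ‖L φ‖ + ‖φ - L φ‖

/-- The continuous inclusion of `X` into `Y` for nested subspaces. -/
noncomputable def inclCLM {V : Type*} [NormedAddCommGroup V] [NormedSpace ℂ V]
    {X Y : Subspace ℂ (Dual ℂ V)} (h : X ≤ Y) : ↥X →L[ℂ] ↥Y :=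
  LinearMap.mkContinuous (E := ↥X) (F := ↥Y) (Submodule.inclusion h) 1 (fun x => by
    rw [one_mul]; exact le_of_eq (by rfl))



set_option maxHeartbeats 1000000
set_option synthInstance.maxHeartbeats 400000

/-- Hahn–Banach: norm-preserving extension along an isometric embedding. -/
lemma exists_ext_abs {A B : Type*} [NormedAddCommGroup A] [NormedSpace ℂ A]
    [NormedAddCommGroup B] [NormedSpace ℂ B] (j : A →L[ℂ] B)
    (hj : ∀ a, ‖j a‖ = ‖a‖) (φ : Dual ℂ A) :
    ∃ ψ : Dual ℂ B, ψ.comp j = φ ∧ ‖ψ‖ = ‖φ‖ := by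
  have hinj : Function.Injective j.toLinearMap := by
    intro a b hab
    have : ‖a - b‖ = 0 := by
      rw [← hj, map_sub]
      simpa [sub_eq_zero] using hab
    have := norm_eq_zero.mp this
    exact sub_eq_zero.mp this
  set p : Subspace ℂ B := LinearMap.range j.toLinearMap with hp
  let e : A ≃ₗ[ℂ] ↥p := LinearEquiv.ofInjective j.toLinearMap hinj
  have he : ∀ a : A, ((e a : ↥p) : B) = j a := fun a => rfl
  have hnorm_symm : ∀ y : ↥p, ‖e.symm y‖ = ‖y‖ := by
    intro y
    have : j (e.symm y) = (y : B) := by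
      conv_rhs => rw [← e.apply_symm_apply y]
      exact (he _).symm
    rw [← hj (e.symm y), this]
    rfl
  let f : ↥p →L[ℂ] ℂ := LinearMap.mkContinuous
    (φ.toLinearMap.comp (e.symm.toLinearMap)) ‖φ‖ (fun y => by
      calc ‖φ (e.symm y)‖ ≤ ‖φ‖ * ‖e.symm y‖ := φ.le_opNorm _
      _ = ‖φ‖ * ‖y‖ := by rw [hnorm_symm])
  have hf_apply : ∀ y : ↥p, f y = φ (e.symm y) := fun y => rfl
  obtain ⟨g, hg, hng⟩ := exists_extension_norm_eq p f
  refine ⟨g, ?_, ?_⟩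
  · ext a
    have h1 := hg (e a)
    rw [hf_apply, e.symm_apply_apply] at h1
    have h2 : ((e a : ↥p) : B) = j a := he a
    simpa [h2] using h1
  · rw [hng]
    apply le_antisymm
    · refine ContinuousLinearMap.opNorm_le_bound _ (norm_nonneg φ) fun y => ?_
      rw [hf_apply]
      calc ‖φ (e.symm y)‖ ≤ ‖φ‖ * ‖e.symm y‖ := φ.le_opNorm _
      _ = ‖φ‖ * ‖y‖ := by rw [hnorm_symm]
    · refine ContinuousLinearMap.opNorm_le_bound _ (norm_nonneg f) fun a => ?_
      have : φ a = f (e a) := by rw [hf_apply, e.symm_apply_apply]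
      rw [this]
      calc ‖f (e a)‖ ≤ ‖f‖ * ‖(e a : ↥p)‖ := f.le_opNorm _
      _ = ‖f‖ * ‖a‖ := by
          congr 1
          show ‖((e a : ↥p) : B)‖ = ‖a‖
          rw [he, hj]

section Aux

variable {V : Type*} [NormedAddCommGroup V] [NormedSpace ℂ V]
variable {X Y : Subspace ℂ (Dual ℂ V)}

lemma norm_inclCLM (hXY : X ≤ Y) (x : ↥X) : ‖inclCLM hXY x‖ = ‖x‖ := rfl

lemma coe_inclCLM (hXY : X ≤ Y) (x : ↥X) :
    ((inclCLM hXY x : ↥Y) : Dual ℂ V) = (x : Dual ℂ V) := rfl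

lemma norm_comp_incl_le (hXY : X ≤ Y) (ψ : Dual ℂ ↥Y) :
    ‖(ψ.comp (inclCLM hXY) : Dual ℂ ↥X)‖ ≤ ‖ψ‖ := by
  refine ContinuousLinearMap.opNorm_le_bound _ (norm_nonneg ψ) fun x => ?_
  calc ‖ψ (inclCLM hXY x)‖ ≤ ‖ψ‖ * ‖inclCLM hXY x‖ := ψ.le_opNorm _
  _ = ‖ψ‖ * ‖x‖ := by rw [norm_inclCLM]

end Aux

/-- if for every `ψ ∈ Y*` vanishing on `X` both `Lψ` and `(I-L)ψ` vanish
on `X`, then `X` admits a Lebesgue decomposition compatible with that of `Y`: the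
restriction to `X` of the absolutely continuous (resp. singular) part of any `ψ ∈ Y*`
is the absolutely continuous (resp. singular) part of `ψ|_X`. -/
theorem stmt3 {V : Type*} [NormedAddCommGroup V] [NormedSpace ℂ V]
    {X Y : Subspace ℂ (Dual ℂ V)} (hXY : X ≤ Y)
    (L : Dual ℂ ↥Y →L[ℂ] Dual ℂ ↥Y) (hL : IsLebesgueDecomposition Y L)
    (hvanish : ∀ ψ : Dual ℂ ↥Y, (∀ x : ↥X, ψ (inclCLM hXY x) = 0) →
      (∀ x : ↥X, (L ψ) (inclCLM hXY x) = 0) ∧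
      (∀ x : ↥X, (ψ - L ψ) (inclCLM hXY x) = 0)) :
    ∃ L' : Dual ℂ ↥X →L[ℂ] Dual ℂ ↥X, IsLebesgueDecomposition X L' ∧
      ∀ ψ : Dual ℂ ↥Y,
        L' (ψ.comp (inclCLM hXY)) = (L ψ).comp (inclCLM hXY) ∧
        (ψ.comp (inclCLM hXY) : Dual ℂ ↥X) - L' (ψ.comp (inclCLM hXY))
          = (ψ - L ψ).comp (inclCLM hXY) := by
  obtain ⟨hidem, hrange, hnormY⟩ := hL
  set incl := inclCLM hXY with hincl
  -- choice of norm-preserving extensions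
  choose ext hext hnext using fun φ : Dual ℂ ↥X =>
    exists_ext_abs (A := ↥X) (B := ↥Y) incl (norm_inclCLM hXY) φ
  -- well-definedness
  have key : ∀ ψ₁ ψ₂ : Dual ℂ ↥Y, ψ₁.comp incl = ψ₂.comp incl →
      (L ψ₁).comp incl = (L ψ₂).comp incl := by
    intro ψ₁ ψ₂ h
    have h0 : ∀ x : ↥X, (ψ₁ - ψ₂) (incl x) = 0 := by
      intro x
      have := ContinuousLinearMap.ext_iff.mp h x
      simp only [ContinuousLinearMap.comp_apply] at this
      simp [ContinuousLinearMap.sub_apply, this]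
    have h1 := (hvanish _ h0).1
    ext x
    have := h1 x
    rw [map_sub] at this
    simp only [ContinuousLinearMap.sub_apply] at this
    simp only [ContinuousLinearMap.comp_apply]
    exact sub_eq_zero.mp this
  -- the decomposition operator on X*
  let L'lin : Dual ℂ ↥X →ₗ[ℂ] Dual ℂ ↥X :=
    { toFun := fun φ => (L (ext φ)).comp incl
      map_add' := by
        intro φ₁ φ₂
        have h : (ext (φ₁ + φ₂)).comp incl = (ext φ₁ + ext φ₂).comp incl := by
          rw [ContinuousLinearMap.add_comp, hext, hext, hext]
        have := key _ _ h
        show (L (ext (φ₁ + φ₂))).comp incl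
            = (L (ext φ₁)).comp incl + (L (ext φ₂)).comp incl
        rw [this, map_add, ContinuousLinearMap.add_comp]
      map_smul' := by
        intro c φ
        have h : (ext (c • φ)).comp incl = (c • ext φ).comp incl := by
          rw [ContinuousLinearMap.smul_comp, hext, hext]
        have := key _ _ h
        show (L (ext (c • φ))).comp incl = c • ((L (ext φ)).comp incl)
        rw [this, map_smul, ContinuousLinearMap.smul_comp] }
  have hL'lin_apply : ∀ φ, L'lin φ = (L (ext φ)).comp incl := fun _ => rfl
  let L' : Dual ℂ ↥X →L[ℂ] Dual ℂ ↥X := LinearMap.mkContinuous L'lin ‖L‖ (fun φ => by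
    rw [hL'lin_apply]
    calc ‖((L (ext φ)).comp incl : Dual ℂ ↥X)‖ ≤ ‖L (ext φ)‖ := norm_comp_incl_le hXY _
    _ ≤ ‖L‖ * ‖ext φ‖ := L.le_opNorm _
    _ = ‖L‖ * ‖φ‖ := by rw [hnext])
  have hL'apply : ∀ φ, L' φ = (L (ext φ)).comp incl := fun _ => rfl
  -- compatibility
  have hcompat : ∀ ψ : Dual ℂ ↥Y, L' (ψ.comp incl) = (L ψ).comp incl := by
    intro ψ
    rw [hL'apply]
    exact key _ _ (hext _)
  have hsubcompat : ∀ φ : Dual ℂ ↥X, φ - L' φ = (ext φ - L (ext φ)).comp incl := by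
    intro φ
    ext x
    rw [hL'apply]
    change φ x - (L (ext φ)) (incl x) = ext φ (incl x) - (L (ext φ)) (incl x)
    have hx : ext φ (incl x) = φ x := by rw [← ContinuousLinearMap.comp_apply, hext]
    rw [hx]
  refine ⟨L', ⟨?_, ?_, ?_⟩, ?_⟩
  · -- idempotent
    intro φ
    rw [hL'apply φ, hcompat (L (ext φ)), hidem, ← hL'apply]
  · -- range
    apply Set.Subset.antisymm
    · rintro _ ⟨φ, rfl⟩
      have hmem : L (ext φ) ∈ ACset Y := by
        rw [← hrange]; exact ⟨ext φ, rfl⟩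
      obtain ⟨Φ, hΦc, hΦ⟩ := hmem
      refine ⟨Φ, hΦc, fun x => ?_⟩
      have h1 : Φ ((x : Dual ℂ V)) = Φ (((incl x : ↥Y) : Dual ℂ V)) := by
        rw [coe_inclCLM]
      rw [h1, hΦ (incl x)]
      rfl
    · rintro φ ⟨Φ, hΦc, hΦ⟩
      -- the restriction of Φ to Y is continuous
      have hcont : Continuous fun y : ↥Y => Φ ((y : Dual ℂ V)) := by
        have h1 : Continuous fun y : ↥Y =>
            (StrongDual.toWeakDual ((y : Dual ℂ V)) : WeakDual ℂ V) :=
          NormedSpace.Dual.toWeakDual_continuous.comp continuous_subtype_val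
        exact hΦc.comp h1
      let ψ : Dual ℂ ↥Y :=
        { toLinearMap := Φ.comp (Y.subtype), cont := hcont }
      have hψ_apply : ∀ y : ↥Y, ψ y = Φ ((y : Dual ℂ V)) := fun _ => rfl
      have hψmem : ψ ∈ ACset Y := ⟨Φ, hΦc, fun y => rfl⟩
      rw [← hrange] at hψmem
      obtain ⟨χ, hχ⟩ := hψmem
      have hLψ : L ψ = ψ := by rw [← hχ, hidem]
      have hψincl : ψ.comp incl = φ := by
        ext x
        simp only [ContinuousLinearMap.comp_apply]
        rw [hψ_apply, coe_inclCLM, hΦ]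
      refine ⟨φ, ?_⟩
      show L' φ = φ
      rw [← hψincl, hcompat, hLψ]
  · -- norm identity
    intro φ
    apply le_antisymm
    · calc ‖φ‖ = ‖L' φ + (φ - L' φ)‖ := by rw [add_sub_cancel]
      _ ≤ ‖L' φ‖ + ‖φ - L' φ‖ := norm_add_le _ _
    · calc ‖L' φ‖ + ‖φ - L' φ‖
          = ‖((L (ext φ)).comp incl : Dual ℂ ↥X)‖ + ‖((ext φ - L (ext φ)).comp incl : Dual ℂ ↥X)‖ := by
            rw [hsubcompat, hL'apply]
      _ ≤ ‖L (ext φ)‖ + ‖ext φ - L (ext φ)‖ :=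
            add_le_add (norm_comp_incl_le hXY _) (norm_comp_incl_le hXY _)
      _ = ‖ext φ‖ := (hnormY _).symm
      _ = ‖φ‖ := hnext φ
  · -- compatibility statement
    intro ψ
    refine ⟨hcompat ψ, ?_⟩
    ext x
    change ψ (incl x) - L' (ψ.comp incl) x = ψ (incl x) - (L ψ) (incl x)
    rw [hcompat ψ]
    rfl
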